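/- Let R = ℂ[T_1,…,T_{m}] and let P = X^n + b_1 X^{n−1} + ⋯ + b_n ∈ R[X] with b_i ∈ R, where m = n−1. Let Q(T, Y) = P(T, Y − b_1/n), so that Q = Y^n + a_2 Y^{n−2} + ⋯ + a_n with a_i ∈ R. Define J(P) = det of the (m+1)×(m+1) Jacobian matrix of the tuple (P, ∂P/∂X, …, ∂^{n−1}P/∂X^{n−1}) with respect to the variables (T_1,…,T_m, X), and J(Q) analogously with Y in place of X. Then J(P) = J(Q); moreover J(P) does not involve X and equals, up to a nonzero scalar, the Jacobian determinant det(∂a_i/∂T_j)_{2≤i≤n, 1≤j≤n−1}. -/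

import Mathlib

open MvPolynomial

/-- The Lyashko–Looijenga Jacobian of a polynomial `P` in the variables
`T_1, …, T_m, X` (where `X` is the last variable): the determinant of the
Jacobian matrix of the tuple `(P, ∂P/∂X, …, ∂^m P/∂X^m)` with respect to
`(T_1, …, T_m, X)`. -/
noncomputable def LLJacobian {m : ℕ} (P : MvPolynomial (Fin (m + 1)) ℂ) :
    MvPolynomial (Fin (m + 1)) ℂ :=
  Matrix.det (fun i j : Fin (m + 1) =>
    pderiv j ((pderiv (Fin.last m))^[(i : ℕ)] P))

namespace LLAux

theorem derivation_map_finset_prod {R A ι : Type*} [DecidableEq ι] [CommRing R] [CommRing A]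
    [Algebra R A] (D : Derivation R A A) (s : Finset ι) (f : ι → A) :
    D (∏ i ∈ s, f i) = ∑ i ∈ s, (∏ j ∈ s.erase i, f j) * D (f i) := by
  induction s using Finset.induction_on with
  | empty => simp
  | @insert a s ha ih =>
    rw [Finset.prod_insert ha, D.leibniz, Finset.sum_insert ha]
    simp only [smul_eq_mul, ih, Finset.mul_sum, Finset.erase_insert ha]
    rw [add_comm]
    congr 1
    apply Finset.sum_congr rfl
    intro i hi
    rw [Finset.erase_insert_of_ne (by rintro rfl; exact ha hi),
      Finset.prod_insert (by simp [ha])]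
    ring

theorem derivation_map_det {R A ι : Type*} [DecidableEq ι] [Fintype ι] [CommRing R] [CommRing A]
    [Algebra R A] (D : Derivation R A A) (M : Matrix ι ι A) :
    D M.det = ∑ i, (M.updateRow i fun j => D (M i j)).det := by
  have key : ∀ (N : Matrix ι ι A), N.det =
      ∑ σ : Equiv.Perm ι, Equiv.Perm.sign σ • ∏ i, N i (σ i) := by
    intro N
    rw [← Matrix.det_transpose, Matrix.det_apply]
    rfl
  rw [key, map_sum]
  have hswap : ∀ σ : Equiv.Perm ι,
      D (Equiv.Perm.sign σ • ∏ i, M i (σ i)) =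
      ∑ i, Equiv.Perm.sign σ • ((∏ j ∈ Finset.univ.erase i, M j (σ j)) * D (M i (σ i))) := by
    intro σ
    rw [Units.smul_def, map_zsmul, derivation_map_finset_prod, Finset.smul_sum]
    simp [Units.smul_def]
  simp only [hswap]
  rw [Finset.sum_comm]
  apply Finset.sum_congr rfl
  intro i _
  rw [key (M.updateRow i fun j => D (M i j))]
  apply Finset.sum_congr rfl
  intro σ _
  congr 1
  rw [← Finset.mul_prod_erase Finset.univ _ (Finset.mem_univ i)]
  rw [Matrix.updateRow_self, mul_comm]
  congr 1
  apply Finset.prod_congr rfl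
  intro j hj
  rw [Matrix.updateRow_ne (Finset.ne_of_mem_erase hj)]

theorem pderiv_comm' {σ R : Type*} [CommRing R] (i j : σ) (f : MvPolynomial σ R) :
    pderiv i (pderiv j f) = pderiv j (pderiv i f) := by
  classical
  induction f using MvPolynomial.induction_on with
  | C a => simp [pderiv_C]
  | add p q hp hq => simp [hp, hq]
  | mul_X p k ih =>
    simp only [pderiv_mul, map_add, pderiv_X, ih]
    have h1 : ∀ l : σ, pderiv l (Pi.single (M := fun _ => MvPolynomial σ R) j 1 k) = 0 := by
      intro l; rcases eq_or_ne j k with rfl | h <;> simp [Pi.single_eq_of_ne, *, pderiv_one]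
    have h2 : ∀ l : σ, pderiv l (Pi.single (M := fun _ => MvPolynomial σ R) i 1 k) = 0 := by
      intro l; rcases eq_or_ne i k with rfl | h <;> simp [Pi.single_eq_of_ne, *, pderiv_one]
    simp only [pderiv_mul, h1, h2, mul_zero, add_zero]
    ring

theorem coeff_pderiv' {σ : Type*} [DecidableEq σ] (i : σ) (t : σ →₀ ℕ)
    (f : MvPolynomial σ ℂ) :
    coeff t (pderiv i f) = ((t i : ℂ) + 1) * coeff (t + Finsupp.single i 1) f := by
  induction f using MvPolynomial.induction_on' with
  | add p q hp hq => simp [map_add, coeff_add, hp, hq, mul_add]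
  | monomial s a =>
      rw [pderiv_monomial, coeff_monomial, coeff_monomial]
      rcases eq_or_ne s (t + Finsupp.single i 1) with rfl | hne
      · rw [if_pos, if_pos rfl]
        · simp [mul_comm]
        · ext j
          rcases eq_or_ne j i with rfl | hj
          · simp
          · simp [Finsupp.single_eq_of_ne' (Ne.symm hj)]
      · rw [if_neg hne]
        rcases Nat.eq_zero_or_pos (s i) with h0 | hpos
        · simp [h0]
        · rw [if_neg, mul_zero]
          intro h
          apply hne
          ext j
          have hj := DFunLike.congr_fun h j
          simp only [Finsupp.coe_tsub, Pi.sub_apply] at hj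
          rcases eq_or_ne j i with rfl | hj'
          · simp only [Finsupp.single_eq_same, Finsupp.coe_add, Pi.add_apply] at hj ⊢
            omega
          · simpa [Finsupp.single_eq_of_ne' (Ne.symm hj')] using hj

theorem exists_rename_of_pderiv_eq_zero {m : ℕ} (F : MvPolynomial (Fin (m + 1)) ℂ)
    (h : pderiv (Fin.last m) F = 0) :
    ∃ G : MvPolynomial (Fin m) ℂ, F = rename Fin.castSucc G := by
  have hsub : ↑F.vars ⊆ Set.range (Fin.castSucc : Fin m → Fin (m+1)) := by
    intro j hj
    rw [Finset.mem_coe, mem_vars] at hj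
    obtain ⟨s, hs, hjs⟩ := hj
    rcases eq_or_ne j (Fin.last m) with rfl | hne
    · exfalso
      have hc := coeff_pderiv' (Fin.last m) (s - Finsupp.single (Fin.last m) 1) F
      rw [h, coeff_zero] at hc
      have hsl : s (Fin.last m) ≠ 0 := by
        rw [Finsupp.mem_support_iff] at hjs; exact hjs
      have hss : s - Finsupp.single (Fin.last m) 1 + Finsupp.single (Fin.last m) 1 = s := by
        ext j
        rcases eq_or_ne j (Fin.last m) with rfl | hj'
        · simp only [Finsupp.coe_add, Finsupp.coe_tsub, Pi.add_apply, Pi.sub_apply,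
            Finsupp.single_eq_same]
          omega
        · simp [Finsupp.single_eq_of_ne' (Ne.symm hj')]
      rw [hss] at hc
      have : coeff s F = 0 := by
        have h2 := hc.symm
        have hne0 : ((s (Fin.last m) - 1 : ℕ) : ℂ) + 1 ≠ 0 :=
          Nat.cast_add_one_ne_zero _
        simpa only [Finsupp.coe_tsub, Pi.sub_apply, Finsupp.single_eq_same,
          mul_eq_zero, hne0, false_or] using h2
      exact (mem_support_iff.mp hs) this
    · obtain ⟨k, hk⟩ := Fin.exists_castSucc_eq.mpr hne
      exact ⟨k, hk⟩
  obtain ⟨G, hG⟩ := F.exists_rename_eq_of_vars_subset_range Fin.castSucc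
    (Fin.castSucc_injective m) hsub
  exact ⟨G, hG.symm⟩

theorem pderiv_aeval_self {σ : Type*} [Fintype σ] [DecidableEq σ]
    (f : σ → MvPolynomial σ ℂ) (j : σ) (F : MvPolynomial σ ℂ) :
    pderiv j (aeval f F) = ∑ k, aeval f (pderiv k F) * pderiv j (f k) := by
  induction F using MvPolynomial.induction_on with
  | C a => simp [pderiv_C]
  | add p q hp hq =>
    rw [map_add, map_add, hp, hq, ← Finset.sum_add_distrib]
    apply Finset.sum_congr rfl
    intros
    simp only [map_add]
    ring
  | mul_X p k₀ ih =>
    have key : ∀ k, aeval f (pderiv k (p * X k₀)) * pderiv j (f k)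
        = aeval f (pderiv k p) * pderiv j (f k) * f k₀
          + aeval f p * pderiv j (f k) * (if k = k₀ then 1 else 0) := by
      intro k
      rw [pderiv_mul, pderiv_X, map_add, map_mul, map_mul, aeval_X]
      have h1 : (aeval f) (Pi.single (M := fun _ => MvPolynomial σ ℂ) k 1 k₀)
          = if k = k₀ then 1 else 0 := by
        rcases eq_or_ne k k₀ with rfl | h <;> simp [Pi.single_eq_of_ne, *]
      rw [h1]
      ring
    symm
    rw [Finset.sum_congr rfl (fun k _ => key k), Finset.sum_add_distrib, ← Finset.sum_mul, ← ih]
    have h2 : ∑ k : σ, aeval f p * pderiv j (f k) * (if k = k₀ then 1 else 0)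
        = aeval f p * pderiv j (f k₀) := by
      rw [Finset.sum_eq_single k₀]
      · simp
      · intro k _ hk; simp [hk]
      · simp
    rw [h2, map_mul, aeval_X, pderiv_mul]

variable {m : ℕ}

theorem pderiv_last_rename (g : MvPolynomial (Fin m) ℂ) :
    pderiv (Fin.last m) (rename Fin.castSucc g) = 0 := by
  apply pderiv_eq_zero_of_notMem_vars
  intro h
  have := vars_rename Fin.castSucc g h
  simp only [Finset.mem_image] at this
  obtain ⟨k, -, hk⟩ := this
  exact absurd hk (Fin.castSucc_lt_last k).ne

theorem aeval_rename_castSucc (f : Fin (m + 1) → MvPolynomial (Fin (m + 1)) ℂ)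
    (hf : ∀ k : Fin m, f (Fin.castSucc k) = X (Fin.castSucc k))
    (g : MvPolynomial (Fin m) ℂ) :
    aeval f (rename Fin.castSucc g) = rename Fin.castSucc g := by
  rw [aeval_rename]
  have : f ∘ Fin.castSucc = X ∘ (Fin.castSucc : Fin m → Fin (m+1)) := by
    funext k; exact hf k
  rw [this]
  rw [rename_eq_aeval]

theorem aeval_fix (f : Fin (m + 1) → MvPolynomial (Fin (m + 1)) ℂ)
    (hf : ∀ k : Fin m, f (Fin.castSucc k) = X (Fin.castSucc k))
    (F : MvPolynomial (Fin (m + 1)) ℂ) (hF : pderiv (Fin.last m) F = 0) :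
    aeval f F = F := by
  obtain ⟨G, rfl⟩ := exists_rename_of_pderiv_eq_zero F hF
  exact aeval_rename_castSucc f hf G

theorem pderiv_last_rename_mul_pow (g : MvPolynomial (Fin m) ℂ) (e : ℕ) :
    pderiv (Fin.last m) (rename Fin.castSucc g * X (Fin.last m) ^ e)
      = e • (rename Fin.castSucc g * X (Fin.last m) ^ (e - 1)) := by
  rw [pderiv_mul, pderiv_last_rename, pderiv_pow, pderiv_X_self, zero_mul, zero_add, mul_one]
  rw [nsmul_eq_mul]
  ring

theorem iterate_pderiv_last_rename_mul_pow (g : MvPolynomial (Fin m) ℂ) (k i : ℕ) :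
    (pderiv (Fin.last m))^[i] (rename Fin.castSucc g * X (Fin.last m) ^ k)
      = k.descFactorial i • (rename Fin.castSucc g * X (Fin.last m) ^ (k - i)) := by
  induction i with
  | zero => simp
  | succ i ih =>
    rw [Function.iterate_succ_apply', ih, map_nsmul, pderiv_last_rename_mul_pow,
      smul_smul, Nat.descFactorial_succ, Nat.sub_sub, mul_comm]

theorem iterate_pderiv_zero (i : ℕ) (d : Fin (m+1)) :
    (pderiv d)^[i] (0 : MvPolynomial (Fin (m + 1)) ℂ) = 0 := by
  induction i with
  | zero => rfl
  | succ i ih => rw [Function.iterate_succ_apply, map_zero, ih]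

theorem iterate_pderiv_add (i : ℕ) (d : Fin (m+1)) (p q : MvPolynomial (Fin (m + 1)) ℂ) :
    (pderiv d)^[i] (p + q) = (pderiv d)^[i] p + (pderiv d)^[i] q := by
  induction i generalizing p q with
  | zero => rfl
  | succ i ih =>
    rw [Function.iterate_succ_apply, map_add, ih, Function.iterate_succ_apply,
      Function.iterate_succ_apply]

theorem iterate_pderiv_sum {ι : Type*} (s : Finset ι) (i : ℕ) (d : Fin (m+1))
    (f : ι → MvPolynomial (Fin (m + 1)) ℂ) :
    (pderiv d)^[i] (∑ t ∈ s, f t) = ∑ t ∈ s, (pderiv d)^[i] (f t) := by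
  classical
  induction s using Finset.induction_on with
  | empty => simp [iterate_pderiv_zero]
  | @insert a s ha ih =>
    rw [Finset.sum_insert ha, Finset.sum_insert ha, iterate_pderiv_add, ih]

theorem expand (c : Fin (m+1) → MvPolynomial (Fin m) ℂ)
    (R : MvPolynomial (Fin (m+1)) ℂ)
    (hR : R = X (Fin.last m) ^ (m+1) +
      ∑ t : Fin (m+1), rename Fin.castSucc (c t) * X (Fin.last m) ^ (m - (t:ℕ)))
    (i : ℕ) :
    (pderiv (Fin.last m))^[i] R =
      (m+1).descFactorial i •
        (rename (Fin.castSucc) (1 : MvPolynomial (Fin m) ℂ) * X (Fin.last m) ^ (m+1-i)) +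
      ∑ t : Fin (m+1), (m - (t:ℕ)).descFactorial i •
        (rename Fin.castSucc (c t) * X (Fin.last m) ^ (m - (t:ℕ) - i)) := by
  have h1 : (X (Fin.last m) ^ (m+1) : MvPolynomial (Fin (m+1)) ℂ)
      = rename Fin.castSucc (1 : MvPolynomial (Fin m) ℂ) * X (Fin.last m) ^ (m+1) := by
    rw [map_one, one_mul]
  rw [hR, h1, iterate_pderiv_add, iterate_pderiv_sum, iterate_pderiv_last_rename_mul_pow]
  congr 1
  exact Finset.sum_congr rfl fun t _ => iterate_pderiv_last_rename_mul_pow _ _ _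

theorem iterate_top (c : Fin (m+1) → MvPolynomial (Fin m) ℂ)
    (R : MvPolynomial (Fin (m+1)) ℂ)
    (hR : R = X (Fin.last m) ^ (m+1) +
      ∑ t : Fin (m+1), rename Fin.castSucc (c t) * X (Fin.last m) ^ (m - (t:ℕ))) :
    (pderiv (Fin.last m))^[m+1] R = C ((Nat.factorial (m+1) : ℂ)) := by
  rw [expand c R hR (m+1)]
  have h2 : ∀ t : Fin (m+1), (m - (t:ℕ)).descFactorial (m+1) = 0 :=
    fun t => Nat.descFactorial_eq_zero_iff_lt.mpr (by omega)
  simp only [h2, zero_smul, Finset.sum_const_zero, add_zero, Nat.descFactorial_self,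
    Nat.sub_self, pow_zero, map_one, one_mul, mul_one]
  rw [nsmul_eq_mul, mul_one]
  exact (map_natCast (C : ℂ →+* MvPolynomial (Fin (m+1)) ℂ) _).symm

theorem pderiv_last_LLJacobian (P : MvPolynomial (Fin (m+1)) ℂ) (c : ℂ)
    (hc : (pderiv (Fin.last m))^[m+1] P = C c) :
    pderiv (Fin.last m) (LLJacobian P) = 0 := by
  unfold LLJacobian
  refine (derivation_map_det (pderiv (Fin.last m)) _).trans ?_
  apply Finset.sum_eq_zero
  intro i _
  have hrow : ∀ (l : ℕ) (j : Fin (m+1)),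
      pderiv (Fin.last m) (pderiv j ((pderiv (Fin.last m))^[l] P)) =
      pderiv j ((pderiv (Fin.last m))^[l+1] P) := by
    intro l j
    rw [pderiv_comm']
    congr 1
    exact (Function.iterate_succ_apply' _ l P).symm
  rcases eq_or_ne i (Fin.last m) with rfl | hne
  · apply Matrix.det_eq_zero_of_row_eq_zero (Fin.last m)
    intro j
    erw [Matrix.updateRow_self]
    rw [hrow]
    have hm : ((Fin.last m : Fin (m+1)) : ℕ) + 1 = m + 1 := by simp
    rw [hm, hc]
    simp [pderiv_C]
  · have hlt : (i : ℕ) + 1 < m + 1 := by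
      have h1 : (i : ℕ) < m + 1 := i.isLt
      have h2 : (i : ℕ) ≠ m := fun h => hne (Fin.ext (by simp [h]))
      omega
    apply Matrix.det_zero_of_row_eq (i := i) (j := ⟨(i : ℕ) + 1, hlt⟩)
    · intro h
      have := congrArg Fin.val h
      simp at this
    · have hne2 : (⟨(i : ℕ) + 1, hlt⟩ : Fin (m+1)) ≠ i := by
        intro h
        have := congrArg Fin.val h
        simp at this
      erw [Matrix.updateRow_self, Matrix.updateRow_ne hne2]
      funext j
      rw [hrow]

end LLAux

/-- The Tschirnhaus translation `Y = X + b₁/n` does not change the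
Lyashko–Looijenga Jacobian: `J(P) = J(Q)`; moreover `J(P)` does not involve
`X` and equals, up to a nonzero scalar, the Jacobian determinant
`det(∂a_i/∂T_j)` of the coefficients `a_2, …, a_n` of `Q`. -/
theorem LLJacobian_translation_invariant (m : ℕ) (n : ℕ) (hn : n = m + 1)
    (b a : Fin n → MvPolynomial (Fin m) ℂ)
    (P Q : MvPolynomial (Fin (m + 1)) ℂ)
    (hP : P = X (Fin.last m) ^ n +
      ∑ i : Fin n, rename (Fin.castSucc) (b i) * X (Fin.last m) ^ (m - (i : ℕ)))
    (hQ : Q = aeval (fun j : Fin (m + 1) =>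
        if j = Fin.last m then
          X (Fin.last m) - C ((n : ℂ)⁻¹) *
            rename (Fin.castSucc) (b ⟨0, by omega⟩)
        else X j) P)
    (ha0 : a ⟨0, by omega⟩ = 0)
    (haQ : Q = X (Fin.last m) ^ n +
      ∑ i : Fin n, rename (Fin.castSucc) (a i) * X (Fin.last m) ^ (m - (i : ℕ))) :
    LLJacobian P = LLJacobian Q ∧
    pderiv (Fin.last m) (LLJacobian P) = 0 ∧
    ∃ u : ℂ, u ≠ 0 ∧
      LLJacobian P = C u * rename (Fin.castSucc)
        (Matrix.det (fun i j : Fin m =>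
          pderiv j (a ⟨(i : ℕ) + 1, by omega⟩))) := by
  subst hn
  classical
  have claim2P : pderiv (Fin.last m) (LLJacobian P) = 0 :=
    LLAux.pderiv_last_LLJacobian P _ (LLAux.iterate_top b P hP)
  have claim2Q : pderiv (Fin.last m) (LLJacobian Q) = 0 :=
    LLAux.pderiv_last_LLJacobian Q _ (LLAux.iterate_top a Q haQ)
  set L := Fin.last m with hLdef
  set fφ : Fin (m + 1) → MvPolynomial (Fin (m + 1)) ℂ := fun j =>
    if j = Fin.last m then
      X (Fin.last m) - C (((m + 1 : ℕ) : ℂ)⁻¹) * rename (Fin.castSucc) (b ⟨0, by omega⟩)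
    else X j with hfφdef
  have hQφ : Q = aeval fφ P := hQ
  have hfcs : ∀ k : Fin m, fφ (Fin.castSucc k) = X (Fin.castSucc k) := fun k =>
    if_neg (Fin.castSucc_lt_last k).ne
  -- entries of the Jacobian of the substitution
  set A : Matrix (Fin (m + 1)) (Fin (m + 1)) (MvPolynomial (Fin (m + 1)) ℂ) :=
    fun k j => pderiv j (fφ k) with hAdef
  have hφlast : pderiv L (fφ L) = 1 := by
    show pderiv L (if L = Fin.last m then _ else _) = 1
    rw [if_pos rfl, map_sub, pderiv_X_self, pderiv_C_mul, LLAux.pderiv_last_rename,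
      mul_zero, sub_zero]
  have hAd : ∀ k, A k k = 1 := by
    intro k
    rcases eq_or_ne k L with rfl | hk
    · exact hφlast
    · show pderiv k (fφ k) = 1
      rw [show fφ k = X k from if_neg hk, pderiv_X_self]
  have hAtri : ∀ k j, k < j → A k j = 0 := by
    intro k j hkj
    have hk : k ≠ L := by
      intro h; subst h; exact absurd hkj (not_lt.mpr (Fin.le_last j))
    show pderiv j (fφ k) = 0
    rw [show fφ k = X k from if_neg hk, pderiv_X_of_ne hkj.ne]
  have hAlastcol : ∀ k, k ≠ L → A k L = 0 := by
    intro k hk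
    show pderiv L (fφ k) = 0
    rw [show fφ k = X k from if_neg hk, pderiv_X_of_ne hk]
  have hdetA : A.det = 1 := by
    have htri : Matrix.BlockTriangular A OrderDual.toDual := by
      intro i j h
      exact hAtri i j h
    rw [Matrix.det_of_lowerTriangular A htri]
    exact Finset.prod_eq_one fun k _ => hAd k
  have hcomm : ∀ F : MvPolynomial (Fin (m + 1)) ℂ, pderiv L (aeval fφ F) = aeval fφ (pderiv L F) := by
    intro F
    rw [LLAux.pderiv_aeval_self]
    rw [Finset.sum_eq_single L]
    · rw [hφlast, mul_one]
    · intro k _ hk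
      rw [show pderiv L (fφ k) = 0 from hAlastcol k hk, mul_zero]
    · intro h; exact absurd (Finset.mem_univ L) h
  have hiter : ∀ (i : ℕ) (F : MvPolynomial (Fin (m + 1)) ℂ), (pderiv L)^[i] (aeval fφ F) = aeval fφ ((pderiv L)^[i] F) := by
    intro i
    induction i with
    | zero => intro F; rfl
    | succ i ih =>
      intro F
      rw [Function.iterate_succ_apply', Function.iterate_succ_apply', ih, hcomm]
  set MP : Matrix (Fin (m + 1)) (Fin (m + 1)) (MvPolynomial (Fin (m + 1)) ℂ) :=
    fun i j => pderiv j ((pderiv L)^[(i : ℕ)] P) with hMPdef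
  set N : Matrix (Fin (m + 1)) (Fin (m + 1)) (MvPolynomial (Fin (m + 1)) ℂ) :=
    fun i j => pderiv j ((pderiv L)^[(i : ℕ)] Q) with hNdef
  have hLLP : LLJacobian P = MP.det := rfl
  have hLLQ : LLJacobian Q = N.det := rfl
  have hNmat : N = MP.map (aeval fφ) * A := by
    funext i j
    show pderiv j ((pderiv L)^[(i : ℕ)] Q) = _
    rw [Matrix.mul_apply, hQφ, hiter, LLAux.pderiv_aeval_self]
    rfl
  have part1 : LLJacobian Q = LLJacobian P := by
    have hmapdet : (MP.map ⇑(aeval fφ)).det = aeval fφ MP.det := by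
      rw [AlgHom.map_det]
      rfl
    rw [hLLQ, hLLP, hNmat, Matrix.det_mul, hdetA, mul_one, hmapdet]
    exact LLAux.aeval_fix fφ hfcs _ claim2P
  refine ⟨part1.symm, claim2P, ?_⟩
  -- Part 3: compute J(Q) by evaluating at X = 0
  set fψ : Fin (m + 1) → MvPolynomial (Fin (m + 1)) ℂ := fun j =>
    if j = Fin.last m then 0 else X j with hfψdef
  have hfψcs : ∀ k : Fin m, fψ (Fin.castSucc k) = X (Fin.castSucc k) := fun k =>
    if_neg (Fin.castSucc_lt_last k).ne
  have hψfix : aeval fψ (LLJacobian Q) = LLJacobian Q :=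
    LLAux.aeval_fix fψ hfψcs _ claim2Q
  have hψrn : ∀ g : MvPolynomial (Fin m) ℂ,
      aeval fψ (rename Fin.castSucc g) = rename Fin.castSucc g :=
    LLAux.aeval_rename_castSucc fψ hfψcs
  have hψX : aeval fψ (X L : MvPolynomial (Fin (m+1)) ℂ) = 0 := by
    rw [aeval_X]
    exact if_pos rfl
  have hψterm : ∀ (g : MvPolynomial (Fin m) ℂ) (e : ℕ),
      aeval fψ (rename Fin.castSucc g * X L ^ e)
        = rename Fin.castSucc g * (if e = 0 then 1 else 0) := by
    intro g e
    rw [map_mul, map_pow, hψrn, hψX]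
    congr 1
    rcases Nat.eq_zero_or_pos e with rfl | he
    · simp
    · rw [if_neg he.ne', zero_pow he.ne']
  have hpdcol : ∀ (g : MvPolynomial (Fin m) ℂ) (e : ℕ) (j' : Fin m),
      pderiv (Fin.castSucc j') (rename Fin.castSucc g * X L ^ e)
        = rename Fin.castSucc (pderiv j' g) * X L ^ e := by
    intro g e j'
    rw [pderiv_mul, pderiv_rename (Fin.castSucc_injective m), pderiv_pow,
      pderiv_X_of_ne (Fin.castSucc_lt_last j').ne', mul_zero, mul_zero, add_zero]
  have hcol : ∀ (i : Fin (m+1)) (j' : Fin m),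
      aeval fψ (pderiv (Fin.castSucc j') ((pderiv L)^[(i : ℕ)] Q))
        = (i : ℕ).factorial •
            rename Fin.castSucc (pderiv j' (a ⟨m - (i : ℕ), by omega⟩)) := by
    intro i j'
    rw [LLAux.expand a Q haQ (i : ℕ)]
    simp only [← hLdef, map_add, map_nsmul, map_sum, hpdcol, hψterm, pderiv_one, map_zero, zero_mul,
      smul_zero, zero_add]
    rw [Finset.sum_eq_single (⟨m - (i : ℕ), by omega⟩ : Fin (m+1))]
    · have hi : (i : ℕ) ≤ m := by omega
      have h1 : m - (m - (i : ℕ)) = (i : ℕ) := by omega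
      show (m - (m - (i:ℕ))).descFactorial (i:ℕ) •
          (rename Fin.castSucc (pderiv j' (a ⟨m - (i:ℕ), _⟩)) *
            (if m - (m - (i:ℕ)) - (i:ℕ) = 0 then 1 else 0)) = _
      rw [h1, Nat.sub_self, if_pos rfl, mul_one, Nat.descFactorial_self]
    · intro t _ ht
      have htv : (t : ℕ) ≠ m - (i : ℕ) := fun hh => ht (Fin.ext hh)
      by_cases h : m - (t : ℕ) - (i : ℕ) = 0
      · have hlt : m - (t : ℕ) < (i : ℕ) := by
          have h1 := t.isLt
          have h2 := i.isLt
          omega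
        rw [Nat.descFactorial_eq_zero_iff_lt.mpr hlt, zero_smul]
      · rw [if_neg h, mul_zero, smul_zero]
    · intro h
      exact absurd (Finset.mem_univ _) h
  have hLval : ((L : Fin (m+1)) : ℕ) = m := rfl
  have hNLL : aeval fψ (N L L) = C ((Nat.factorial (m+1) : ℂ)) := by
    show aeval fψ (pderiv L ((pderiv L)^[(L : ℕ)] Q)) = _
    have h1 : pderiv L ((pderiv L)^[(L : ℕ)] Q) = (pderiv L)^[m+1] Q := by
      rw [hLval]
      exact (Function.iterate_succ_apply' (⇑(pderiv L)) m Q).symm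
    rw [h1, LLAux.iterate_top a Q haQ, aeval_C]
    rfl
  have hrowL0 : ∀ j' : Fin m, aeval fψ (N L (Fin.castSucc j')) = 0 := by
    intro j'
    show aeval fψ (pderiv (Fin.castSucc j') ((pderiv L)^[(L : ℕ)] Q)) = 0
    rw [hcol L j']
    have e1 : pderiv j' (a ⟨m - ((L : Fin (m+1)) : ℕ), by omega⟩) = 0 := by
      have h00 : (⟨m - ((L : Fin (m+1)) : ℕ), by omega⟩ : Fin (m+1)) = (⟨0, by omega⟩ : Fin (m+1)) :=
        Fin.ext (by show m - ((L : Fin (m+1)) : ℕ) = 0; have := hLval; omega)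
      rw [h00, ha0, map_zero]
    rw [e1, map_zero, smul_zero]
  set D0 : Matrix (Fin m) (Fin m) (MvPolynomial (Fin m) ℂ) :=
    fun i j => pderiv j (a ⟨(i : ℕ) + 1, by omega⟩) with hD0def
  have hψdet : LLJacobian Q = (N.map ⇑(aeval fψ)).det := by
    conv_lhs => rw [← hψfix, hLLQ]
    rw [AlgHom.map_det]
    rfl
  have hexp := Matrix.det_succ_row (N.map ⇑(aeval fψ)) L
  rw [Finset.sum_eq_single L] at hexp
  rotate_left
  · intro j _ hj
    obtain ⟨j', rfl⟩ := Fin.exists_castSucc_eq.mpr hj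
    have h0 : (N.map ⇑(aeval fψ)) L (Fin.castSucc j') = 0 := hrowL0 j'
    rw [h0, mul_zero, zero_mul]
  · intro h
    exact absurd (Finset.mem_univ _) h
  have hminor : (N.map ⇑(aeval fψ)).submatrix L.succAbove L.succAbove
      = Matrix.of (fun i' j' : Fin m => C (((i' : ℕ).factorial : ℂ)) *
          ((D0.map ⇑(rename (Fin.castSucc : Fin m → Fin (m+1)))).submatrix
            Fin.revPerm id i' j')) := by
    funext i' j'
    show aeval fψ (N (L.succAbove i') (L.succAbove j')) = _
    rw [show L.succAbove i' = Fin.castSucc i' from Fin.succAbove_last_apply i',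
      show L.succAbove j' = Fin.castSucc j' from Fin.succAbove_last_apply j']
    rw [hcol (Fin.castSucc i') j']
    show ((i' : ℕ).factorial) • rename Fin.castSucc (pderiv j' (a ⟨m - (i' : ℕ), _⟩))
      = C (((i' : ℕ).factorial : ℂ)) *
          rename Fin.castSucc (pderiv j' (a ⟨((Fin.revPerm i' : Fin m) : ℕ) + 1, _⟩))
    have e2 : (⟨m - (i' : ℕ), by omega⟩ : Fin (m+1))
        = ⟨((Fin.revPerm i' : Fin m) : ℕ) + 1, by omega⟩ := by
      apply Fin.ext
      show m - (i' : ℕ) = ((Fin.rev i' : Fin m) : ℕ) + 1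
      rw [Fin.val_rev]
      have := i'.isLt
      omega
    rw [← e2, nsmul_eq_mul]
    congr 1
  have hdetminor := Matrix.det_mul_column
    (fun i' : Fin m => C (((i' : ℕ).factorial : ℂ)) : Fin m → MvPolynomial (Fin (m+1)) ℂ)
    ((D0.map ⇑(rename (Fin.castSucc : Fin m → Fin (m+1)))).submatrix Fin.revPerm id)
  have hdetperm := Matrix.det_permute (Fin.revPerm : Equiv.Perm (Fin m))
    (D0.map ⇑(rename (Fin.castSucc : Fin m → Fin (m+1))))
  have hrnd : (D0.map ⇑(rename (Fin.castSucc : Fin m → Fin (m+1)))).det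
      = rename Fin.castSucc D0.det := by
    rw [AlgHom.map_det]
    rfl
  have hsign : ((-1 : MvPolynomial (Fin (m+1)) ℂ)) ^ ((L : ℕ) + (L : ℕ)) = 1 :=
    Even.neg_one_pow ⟨m, by rw [hLval]⟩
  have hmapLL : (N.map ⇑(aeval fψ)) L L = aeval fψ (N L L) := rfl
  rw [hmapLL, hNLL, hsign, one_mul, hminor, hdetminor, hdetperm, hrnd] at hexp
  -- now assemble the unit
  refine ⟨(Nat.factorial (m+1) : ℂ) * ((∏ i' : Fin m, ((i' : ℕ).factorial : ℂ)) *
    ((Equiv.Perm.sign (Fin.revPerm : Equiv.Perm (Fin m)) : ℤ) : ℂ)), ?_, ?_⟩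
  · apply mul_ne_zero
    · exact Nat.cast_ne_zero.mpr (Nat.factorial_ne_zero _)
    · apply mul_ne_zero
      · exact Finset.prod_ne_zero_iff.mpr fun i _ =>
          Nat.cast_ne_zero.mpr (Nat.factorial_ne_zero _)
      · exact Int.cast_ne_zero.mpr (Units.ne_zero _)
  · rw [part1.symm, hψdet, hexp]
    rw [map_mul, map_mul]
    rw [map_natCast (C : ℂ →+* MvPolynomial (Fin (m+1)) ℂ)]
    rw [map_prod (C : ℂ →+* MvPolynomial (Fin (m+1)) ℂ)]
    rw [map_intCast (C : ℂ →+* MvPolynomial (Fin (m+1)) ℂ)]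
    ring
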